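/- For every integer n ≥ 2, the double Roman bondage number of the path P_n on n vertices satisfies b_dR(P_n) = 1. -/
import Mathlib


/-- A double Roman dominating function (DRDF) on a graph `G`: a function
`f : V → ℕ` taking values in `{0,1,2,3}` such that every vertex assigned `0`
has a neighbor assigned `3` or two distinct neighbors assigned `2`, and every
vertex assigned `1` has a neighbor assigned at least `2`. -/
def IsDRDF {V : Type*} (G : SimpleGraph V) (f : V → ℕ) : Prop :=
  (∀ v, f v ≤ 3) ∧
  (∀ v, f v = 0 →
    (∃ w, G.Adj v w ∧ f w = 3) ∨
    (∃ w₁ w₂, G.Adj v w₁ ∧ G.Adj v w₂ ∧ w₁ ≠ w₂ ∧ f w₁ = 2 ∧ f w₂ = 2)) ∧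
  (∀ v, f v = 1 → ∃ w, G.Adj v w ∧ 2 ≤ f w)

/-- The double Roman domination number `γ_dR(G)`: the minimum weight of a DRDF on `G`. -/
noncomputable def gammaDR {V : Type*} [Fintype V] (G : SimpleGraph V) : ℕ :=
  sInf {k | ∃ f : V → ℕ, IsDRDF G f ∧ ∑ v, f v = k}

/-- The double Roman bondage number `b_dR(G)`: the minimum cardinality of a set
`B` of edges of `G` such that `γ_dR(G - B) > γ_dR(G)`. -/
noncomputable def bDR {V : Type*} [Fintype V] (G : SimpleGraph V) : ℕ :=
  sInf {k | ∃ B : Finset (Sym2 V), ↑B ⊆ G.edgeSet ∧ B.card = k ∧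
    gammaDR G < gammaDR (G.deleteEdges ↑B)}


namespace DRP

/-- DRDF conditions on an abstract path with vertices `0,…,m-1`. -/
def D (m : ℕ) (f : ℕ → ℕ) : Prop :=
  (∀ i, i < m → f i ≤ 3) ∧
  (∀ i, i < m → f i = 0 →
     (1 ≤ i ∧ f (i-1) = 3) ∨ (i+1 < m ∧ f (i+1) = 3) ∨
     (1 ≤ i ∧ i+1 < m ∧ f (i-1) = 2 ∧ f (i+1) = 2)) ∧
  (∀ i, i < m → f i = 1 → (1 ≤ i ∧ 2 ≤ f (i-1)) ∨ (i+1 < m ∧ 2 ≤ f (i+1)))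

def W (m : ℕ) (f : ℕ → ℕ) : ℕ := ∑ i ∈ Finset.range m, f i

def lb (m : ℕ) : ℕ := m + (if m % 3 = 0 then 0 else 1)

/-- clean restriction : if `f k ≤ 1` then the restriction to `[0,k)` is a DRDF. -/
lemma restrict_clean {m k : ℕ} {f : ℕ → ℕ} (hf : D m f) (hk : k ≤ m) (h1 : f k ≤ 1) :
    D k f := by
  obtain ⟨hb, h0, hone⟩ := hf
  refine ⟨fun i hi => hb i (by omega), fun i hi hz => ?_, fun i hi hz => ?_⟩
  · rcases h0 i (by omega) hz with h | h | h
    · exact Or.inl h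
    · rcases Nat.lt_or_ge (i+1) k with hc | hc
      · exact Or.inr (Or.inl ⟨hc, h.2⟩)
      · exfalso; have hik : i + 1 = k := by omega
        rw [hik] at h; omega
    · rcases Nat.lt_or_ge (i+1) k with hc | hc
      · exact Or.inr (Or.inr ⟨h.1, hc, h.2.2⟩)
      · exfalso; have hik : i + 1 = k := by omega
        rw [hik] at h; omega
  · rcases hone i (by omega) hz with h | h
    · exact Or.inl h
    · rcases Nat.lt_or_ge (i+1) k with hc | hc
      · exact Or.inr ⟨hc, h.2⟩
      · exfalso; have hik : i + 1 = k := by omega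
        rw [hik] at h; omega

/-- bumped restriction : always, the restriction to `[0,k)` with the last value bumped
to at least 2 is a DRDF, of weight at most `W k f + 2`. -/
lemma restrict_bump {m k : ℕ} {f : ℕ → ℕ} (hf : D m f) (hk : k ≤ m) (hk1 : 1 ≤ k) :
    ∃ g : ℕ → ℕ, D k g ∧ W k g ≤ W k f + 2 := by
  obtain ⟨hb, h0, hone⟩ := hf
  set g : ℕ → ℕ := fun i => if i = k - 1 then max (f i) 2 else f i with hg
  have hgk : g (k-1) = max (f (k-1)) 2 := by simp [hg]
  have hgne : ∀ i, i ≠ k - 1 → g i = f i := by intro i hik; simp [hg, hik]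
  refine ⟨g, ⟨?_, ?_, ?_⟩, ?_⟩
  · intro i hi
    by_cases hik : i = k - 1
    · rw [hik, hgk]; have := hb (k-1) (by omega); omega
    · rw [hgne i hik]; exact hb _ (by omega)
  · intro i hi hz
    by_cases hik : i = k - 1
    · rw [hik, hgk] at hz; omega
    · rw [hgne i hik] at hz
      have hi' : i + 1 < k := by omega
      have hm1 : i - 1 ≠ k - 1 := by omega
      rcases h0 i (by omega) hz with h | h | h
      · exact Or.inl ⟨h.1, by rw [hgne _ hm1]; exact h.2⟩
      · refine Or.inr (Or.inl ⟨hi', ?_⟩)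
        by_cases hik1 : i + 1 = k - 1
        · rw [hik1, hgk, ← hik1, h.2]; rfl
        · rw [hgne _ hik1]; exact h.2
      · refine Or.inr (Or.inr ⟨h.1, hi', by rw [hgne _ hm1]; exact h.2.2.1, ?_⟩)
        by_cases hik1 : i + 1 = k - 1
        · rw [hik1, hgk, ← hik1, h.2.2.2]; rfl
        · rw [hgne _ hik1]; exact h.2.2.2
  · intro i hi hz
    by_cases hik : i = k - 1
    · rw [hik, hgk] at hz; omega
    · rw [hgne i hik] at hz
      have hi' : i + 1 < k := by omega
      have hm1 : i - 1 ≠ k - 1 := by omega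
      rcases hone i (by omega) hz with h | h
      · exact Or.inl ⟨h.1, by rw [hgne _ hm1]; exact h.2⟩
      · refine Or.inr ⟨hi', ?_⟩
        by_cases hik1 : i + 1 = k - 1
        · rw [hik1, hgk]; omega
        · rw [hgne _ hik1]; exact h.2
  · unfold W
    have hle : ∀ i ∈ Finset.range k, g i ≤ f i + (if i = k-1 then 2 else 0) := by
      intro i _
      by_cases hik : i = k - 1
      · rw [hik, hgk]; simp
      · rw [hgne i hik]; simp [hik]
    have hmem : k - 1 ∈ Finset.range k := by simp; omega
    calc ∑ i ∈ Finset.range k, g i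
        ≤ ∑ i ∈ Finset.range k, (f i + if i = k-1 then 2 else 0) := Finset.sum_le_sum hle
      _ = (∑ i ∈ Finset.range k, f i) + ∑ i ∈ Finset.range k, (if i = k-1 then 2 else 0) := by
          rw [Finset.sum_add_distrib]
      _ ≤ (∑ i ∈ Finset.range k, f i) + 2 := by
          gcongr
          rw [Finset.sum_ite_eq' (Finset.range k) (k-1) (fun _ => 2), if_pos hmem]

end DRP

namespace DRP

lemma restrict_high {m k : ℕ} {f : ℕ → ℕ} (hf : D m f) (hk : k ≤ m) (h2 : 2 ≤ f (k-1)) :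
    D k f := by
  obtain ⟨hb, h0, hone⟩ := hf
  have hb' : ∀ i, i < k → f i ≤ 3 := fun i hi => hb i (by omega)
  refine ⟨hb', fun i hi hz => ?_, fun i hi hz => ?_⟩
  · have hik : i ≠ k - 1 := by intro h; rw [h] at hz; omega
    have hi' : i + 1 < k := by omega
    rcases h0 i (by omega) hz with h | h | h
    · exact Or.inl h
    · exact Or.inr (Or.inl ⟨hi', h.2⟩)
    · exact Or.inr (Or.inr ⟨h.1, hi', h.2.2⟩)
  · have hik : i ≠ k - 1 := by intro h; rw [h] at hz; omega
    have hi' : i + 1 < k := by omega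
    rcases hone i (by omega) hz with h | h
    · exact Or.inl h
    · exact Or.inr ⟨hi', h.2⟩

lemma lb_spec (k : ℕ) : (k % 3 = 0 ∧ lb k = k) ∨ (k % 3 ≠ 0 ∧ lb k = k + 1) := by
  unfold lb; by_cases h : k % 3 = 0 <;> simp [h]

lemma W_succ (k : ℕ) (f : ℕ → ℕ) : W (k+1) f = W k f + f k := Finset.sum_range_succ f k

set_option maxHeartbeats 1000000 in
theorem lower_bound : ∀ m, 1 ≤ m → ∀ f, D m f → lb m ≤ W m f ∧ (f (m-1) = 2 → m + 2 ≤ W m f + 1) := by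
  intro m
  induction m using Nat.strong_induction_on with
  | _ m IH =>
  intro hm f hf
  rcases le_or_gt m 5 with h5 | h6
  · -- base cases
    obtain ⟨hb, h0, h1⟩ := hf
    interval_cases m
    · have b0 := hb 0 (by norm_num); have z0 := h0 0 (by norm_num); have u0 := h1 0 (by norm_num)
      clear hb h0 h1
      norm_num [W, lb, Finset.sum_range_succ] at *
      omega
    · have b0 := hb 0 (by norm_num); have z0 := h0 0 (by norm_num); have u0 := h1 0 (by norm_num)
      have b1 := hb 1 (by norm_num); have z1 := h0 1 (by norm_num); have u1 := h1 1 (by norm_num)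
      clear hb h0 h1
      norm_num [W, lb, Finset.sum_range_succ] at *
      omega
    · have b0 := hb 0 (by norm_num); have z0 := h0 0 (by norm_num); have u0 := h1 0 (by norm_num)
      have b1 := hb 1 (by norm_num); have z1 := h0 1 (by norm_num); have u1 := h1 1 (by norm_num)
      have b2 := hb 2 (by norm_num); have z2 := h0 2 (by norm_num); have u2 := h1 2 (by norm_num)
      clear hb h0 h1
      norm_num [W, lb, Finset.sum_range_succ] at *
      omega
    · have b0 := hb 0 (by norm_num); have z0 := h0 0 (by norm_num); have u0 := h1 0 (by norm_num)
      have b1 := hb 1 (by norm_num); have z1 := h0 1 (by norm_num); have u1 := h1 1 (by norm_num)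
      have b2 := hb 2 (by norm_num); have z2 := h0 2 (by norm_num); have u2 := h1 2 (by norm_num)
      have b3 := hb 3 (by norm_num); have z3 := h0 3 (by norm_num); have u3 := h1 3 (by norm_num)
      clear hb h0 h1
      norm_num [W, lb, Finset.sum_range_succ] at *
      omega
    · have b0 := hb 0 (by norm_num); have z0 := h0 0 (by norm_num); have u0 := h1 0 (by norm_num)
      have b1 := hb 1 (by norm_num); have z1 := h0 1 (by norm_num); have u1 := h1 1 (by norm_num)
      have b2 := hb 2 (by norm_num); have z2 := h0 2 (by norm_num); have u2 := h1 2 (by norm_num)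
      have b3 := hb 3 (by norm_num); have z3 := h0 3 (by norm_num); have u3 := h1 3 (by norm_num)
      have b4 := hb 4 (by norm_num); have z4 := h0 4 (by norm_num); have u4 := h1 4 (by norm_num)
      clear hb h0 h1
      norm_num [W, lb, Finset.sum_range_succ] at *
      omega
  · -- inductive step
    obtain ⟨p, rfl⟩ : ∃ p, m = p + 6 := ⟨m - 6, by omega⟩
    have e2 : p + 3 - 1 = p + 2 := rfl
    have e3 : p + 4 - 1 = p + 3 := rfl
    have e4 : p + 5 - 1 = p + 4 := rfl
    have e5 : p + 6 - 1 = p + 5 := rfl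
    have b1 := hf.1 (p+1) (by omega)
    have b2 := hf.1 (p+2) (by omega)
    have b3 := hf.1 (p+3) (by omega)
    have b4 := hf.1 (p+4) (by omega)
    have b5 := hf.1 (p+5) (by omega)
    have c3 := hf.2.1 (p+3) (by omega)
    have c4 := hf.2.1 (p+4) (by omega)
    have c5 := hf.2.1 (p+5) (by omega)
    have o3 := hf.2.2 (p+3) (by omega)
    have o4 := hf.2.2 (p+4) (by omega)
    have o5 := hf.2.2 (p+5) (by omega)
    have a3 : p + 3 + 1 = p + 4 := rfl
    have a4 : p + 4 + 1 = p + 5 := rfl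
    have a5 : p + 5 + 1 = p + 6 := rfl
    rw [e2, a3] at c3 o3
    rw [e3, a4] at c4 o4
    rw [e4, a5] at c5 o5
    have F1 : f (p+3) ≤ 1 → lb (p+3) ≤ W (p+3) f := fun h =>
      (IH (p+3) (by omega) (by omega) f (restrict_clean hf (by omega) h)).1
    have F2 : lb (p+3) ≤ W (p+3) f + 2 := by
      obtain ⟨g, hg, hw⟩ := restrict_bump hf (k := p+3) (by omega) (by omega)
      have := (IH (p+3) (by omega) (by omega) g hg).1
      omega
    have F3 : 2 ≤ f (p+3) → lb (p+4) ≤ W (p+4) f := fun h =>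
      (IH (p+4) (by omega) (by omega) f (restrict_high hf (by omega) (by rw [e3]; omega))).1
    have F4 : f (p+3) = 2 → p + 6 ≤ W (p+4) f + 1 := fun h =>
      (IH (p+4) (by omega) (by omega) f (restrict_high hf (by omega) (by rw [e3]; omega))).2
        (by rw [e3]; exact h)
    have F5 : f (p+1) ≤ 1 → lb (p+1) ≤ W (p+1) f := fun h =>
      (IH (p+1) (by omega) (by omega) f (restrict_clean hf (by omega) h)).1
    have F6 : lb (p+1) ≤ W (p+1) f + 2 := by
      obtain ⟨g, hg, hw⟩ := restrict_bump hf (k := p+1) (by omega) (by omega)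
      have := (IH (p+1) (by omega) (by omega) g hg).1
      omega
    have s1 : W (p+6) f = W (p+5) f + f (p+5) := W_succ (p+5) f
    have s2 : W (p+5) f = W (p+4) f + f (p+4) := W_succ (p+4) f
    have s3 : W (p+4) f = W (p+3) f + f (p+3) := W_succ (p+3) f
    have s4 : W (p+3) f = W (p+2) f + f (p+2) := W_succ (p+2) f
    have s5 : W (p+2) f = W (p+1) f + f (p+1) := W_succ (p+1) f
    rw [e5]
    clear hf IH h6 hm e2 e3 e4 e5 a3 a4 a5
    have lbe : ∀ k, k % 3 = 0 → lb k = k := fun k h => by unfold lb; simp [h]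
    have lbe' : ∀ k, k % 3 ≠ 0 → lb k = k + 1 := fun k h => by unfold lb; simp [h]
    have hsplit : p % 3 = 0 ∨ p % 3 = 1 ∨ p % 3 = 2 := by omega
    rcases hsplit with h|h|h
    · have L1 := lbe' (p+1) (by omega)
      have L3 := lbe (p+3) (by omega)
      have L4 := lbe' (p+4) (by omega)
      have L6 := lbe (p+6) (by omega)
      clear lbe lbe'
      omega
    · have L1 := lbe' (p+1) (by omega)
      have L3 := lbe' (p+3) (by omega)
      have L4 := lbe' (p+4) (by omega)
      have L6 := lbe' (p+6) (by omega)
      clear lbe lbe'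
      omega
    · have L1 := lbe (p+1) (by omega)
      have L3 := lbe' (p+3) (by omega)
      have L4 := lbe (p+4) (by omega)
      have L6 := lbe' (p+6) (by omega)
      clear lbe lbe'
      omega

end DRP



namespace DRP

/-- `G` is the path graph on `Fin n` minus the edge `{t-1, t}`. -/
def AdjSpec (n t : ℕ) (G : SimpleGraph (Fin n)) : Prop :=
  ∀ u v : Fin n, G.Adj u v ↔
    (((u : ℕ) + 1 = v ∨ (v : ℕ) + 1 = u) ∧
      ¬((u : ℕ) = t - 1 ∧ (v : ℕ) = t) ∧ ¬((u : ℕ) = t ∧ (v : ℕ) = t - 1))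

lemma transfer {n t : ℕ} (ht : 1 ≤ t) (htn : t < n) {G : SimpleGraph (Fin n)}
    (hG : AdjSpec n t G) {f : Fin n → ℕ} (hf : IsDRDF G f) :
    D (n - t) (fun i => if h : t + i < n then f ⟨t + i, h⟩ else 0) := by
  set g : ℕ → ℕ := fun i => if h : t + i < n then f ⟨t + i, h⟩ else 0 with hg
  have hgval : ∀ (i : ℕ) (h : t + i < n), g i = f ⟨t + i, h⟩ := by
    intro i h; simp [hg, h]
  have gmap : ∀ (w : Fin n) (j : ℕ) (hj : t + j < n), (w : ℕ) = t + j → f w = g j := by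
    intro w j hj hw
    rw [hgval j hj]; congr 1; exact Fin.ext hw
  refine ⟨fun i hi => ?_, fun i hi hz => ?_, fun i hi hz => ?_⟩
  · rw [hgval i (by omega)]; exact hf.1 _
  · rw [hgval i (by omega)] at hz
    rcases hf.2.1 _ hz with ⟨w, hw, hw3⟩ | ⟨w₁, w₂, hw1, hw2, hne, e1, e2⟩
    · rw [hG] at hw
      obtain ⟨hp, hd1, hd2⟩ := hw
      simp only [Fin.val_mk] at hp hd1 hd2
      have hwlt := w.isLt
      rcases hp with hp | hp
      · exact Or.inr (Or.inl ⟨by omega, by rw [← gmap w (i+1) (by omega) (by omega)]; exact hw3⟩)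
      · have hi1 : 1 ≤ i := by
          by_contra hcon
          exact hd2 ⟨by omega, by omega⟩
        exact Or.inl ⟨hi1, by rw [← gmap w (i-1) (by omega) (by omega)]; exact hw3⟩
    · rw [hG] at hw1 hw2
      obtain ⟨hp1, hd11, hd12⟩ := hw1
      obtain ⟨hp2, hd21, hd22⟩ := hw2
      simp only [Fin.val_mk] at hp1 hd11 hd12 hp2 hd21 hd22
      have hvne : (w₁ : ℕ) ≠ (w₂ : ℕ) := fun h => hne (Fin.ext h)
      have hw1lt := w₁.isLt
      have hw2lt := w₂.isLt
      have l1 : (w₁ : ℕ) + 1 = t + i → 1 ≤ i := by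
        intro h; by_contra hc; exact hd12 ⟨by omega, by omega⟩
      have l2 : (w₂ : ℕ) + 1 = t + i → 1 ≤ i := by
        intro h; by_contra hc; exact hd22 ⟨by omega, by omega⟩
      rcases hp1 with A1 | B1 <;> rcases hp2 with A2 | B2
      · exact absurd (by omega : (w₁ : ℕ) = (w₂ : ℕ)) hvne
      · refine Or.inr (Or.inr ⟨l2 B2, by omega, ?_, ?_⟩)
        · rw [← gmap w₂ (i-1) (by omega) (by have := l2 B2; omega)]; exact e2
        · rw [← gmap w₁ (i+1) (by omega) (by omega)]; exact e1
      · refine Or.inr (Or.inr ⟨l1 B1, by omega, ?_, ?_⟩)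
        · rw [← gmap w₁ (i-1) (by omega) (by have := l1 B1; omega)]; exact e1
        · rw [← gmap w₂ (i+1) (by omega) (by omega)]; exact e2
      · exact absurd (by omega : (w₁ : ℕ) = (w₂ : ℕ)) hvne
  · rw [hgval i (by omega)] at hz
    obtain ⟨w, hw, hw2⟩ := hf.2.2 _ hz
    rw [hG] at hw
    obtain ⟨hp, hd1, hd2⟩ := hw
    simp only [Fin.val_mk] at hp hd1 hd2
    have hwlt := w.isLt
    rcases hp with hp | hp
    · exact Or.inr ⟨by omega, by rw [← gmap w (i+1) (by omega) (by omega)]; exact hw2⟩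
    · have hi1 : 1 ≤ i := by
        by_contra hcon
        exact hd2 ⟨by omega, by omega⟩
      exact Or.inl ⟨hi1, by rw [← gmap w (i-1) (by omega) (by omega)]; exact hw2⟩

end DRP

namespace DRP

lemma prefix1 {n : ℕ} (hn : 1 < n) {G : SimpleGraph (Fin n)} (hG : AdjSpec n 1 G)
    {f : Fin n → ℕ} (hf : IsDRDF G f) (h0 : 0 < n) : 2 ≤ f ⟨0, h0⟩ := by
  have noadj : ∀ w, ¬ G.Adj ⟨0, h0⟩ w := by
    intro w hw
    rw [hG] at hw
    simp only [Fin.val_mk, true_and, and_true, false_and, and_false, not_true, not_false_iff] at hw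
    omega
  by_contra hc
  have h01 : f ⟨0, h0⟩ = 0 ∨ f ⟨0, h0⟩ = 1 := by omega
  rcases h01 with h | h
  · rcases hf.2.1 _ h with ⟨w, hw, _⟩ | ⟨w, _, hw, _⟩ <;> exact noadj w hw
  · obtain ⟨w, hw, _⟩ := hf.2.2 _ h
    exact noadj w hw

lemma prefix2 {n : ℕ} (hn : 2 < n) {G : SimpleGraph (Fin n)} (hG : AdjSpec n 2 G)
    {f : Fin n → ℕ} (hf : IsDRDF G f) (h0 : 0 < n) (h1 : 1 < n) :
    3 ≤ f ⟨0, h0⟩ + f ⟨1, h1⟩ := by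
  have adj0 : ∀ w, G.Adj ⟨0, h0⟩ w → w = ⟨1, h1⟩ := by
    intro w hw
    rw [hG] at hw
    simp only [Fin.val_mk, true_and, and_true, false_and, and_false, not_true, not_false_iff] at hw
    apply Fin.ext
    simp only [Fin.val_mk]
    omega
  have adj1 : ∀ w, G.Adj ⟨1, h1⟩ w → w = ⟨0, h0⟩ := by
    intro w hw
    rw [hG] at hw
    simp only [Fin.val_mk, true_and, and_true, false_and, and_false, not_true, not_false_iff] at hw
    apply Fin.ext
    simp only [Fin.val_mk]
    omega
  have F0 : f ⟨0, h0⟩ = 0 → f ⟨1, h1⟩ = 3 := by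
    intro h
    rcases hf.2.1 _ h with ⟨w, hw, hw3⟩ | ⟨w₁, w₂, hw1, hw2, hne, _, _⟩
    · rw [← adj0 w hw]; exact hw3
    · exact absurd ((adj0 _ hw1).trans (adj0 _ hw2).symm) hne
  have F1 : f ⟨0, h0⟩ = 1 → 2 ≤ f ⟨1, h1⟩ := by
    intro h
    obtain ⟨w, hw, hw2⟩ := hf.2.2 _ h
    rw [← adj0 w hw]; exact hw2
  have G0 : f ⟨1, h1⟩ = 0 → f ⟨0, h0⟩ = 3 := by
    intro h
    rcases hf.2.1 _ h with ⟨w, hw, hw3⟩ | ⟨w₁, w₂, hw1, hw2, hne, _, _⟩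
    · rw [← adj1 w hw]; exact hw3
    · exact absurd ((adj1 _ hw1).trans (adj1 _ hw2).symm) hne
  have G1 : f ⟨1, h1⟩ = 1 → 2 ≤ f ⟨0, h0⟩ := by
    intro h
    obtain ⟨w, hw, hw2⟩ := hf.2.2 _ h
    rw [← adj1 w hw]; exact hw2
  omega

lemma weight_split {n t : ℕ} (h : t ≤ n) (f : Fin n → ℕ) :
    ∑ v, f v = (∑ i ∈ Finset.range t, (if h : i < n then f ⟨i, h⟩ else 0)) +
      W (n - t) (fun i => if h : t + i < n then f ⟨t + i, h⟩ else 0) := by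
  set F : ℕ → ℕ := fun i => if h : i < n then f ⟨i, h⟩ else 0 with hF
  have h1 : ∑ v, f v = ∑ i ∈ Finset.range n, F i := by
    rw [← Fin.sum_univ_eq_sum_range F n]
    apply Finset.sum_congr rfl
    intro v _
    simp [hF, v.isLt]
  have h2 := Finset.sum_range_add F t (n - t)
  rw [show t + (n - t) = n by omega] at h2
  rw [h1, h2]
  rfl

def ubN (n : ℕ) : ℕ → ℕ := fun i => if n % 3 = 1 ∧ i = n - 1 then 2 else if i % 3 = 1 then 3 else 0

lemma Scount (n : ℕ) : ∑ i ∈ Finset.range n, (if i % 3 = 1 then 3 else 0) = 3 * ((n+1)/3) := by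
  induction n with
  | zero => simp
  | succ n ih =>
    rw [Finset.sum_range_succ, ih]
    by_cases h : n % 3 = 1 <;> simp [h] <;> omega

lemma sum_ubN (n : ℕ) : ∑ i ∈ Finset.range n, ubN n i = lb n := by
  by_cases hc : n % 3 = 1
  · have hn1 : 1 ≤ n := by omega
    rw [show n = (n-1) + 1 by omega, Finset.sum_range_succ]
    rw [show (n-1) + 1 = n by omega]
    have e1 : ubN n (n-1) = 2 := by simp [ubN, hc]
    have e2 : ∀ i ∈ Finset.range (n-1), ubN n i = if i % 3 = 1 then 3 else 0 := by
      intro i hi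
      simp only [Finset.mem_range] at hi
      simp [ubN, show ¬(n % 3 = 1 ∧ i = n - 1) from by omega]
    rw [e1, Finset.sum_congr rfl e2, Scount]
    unfold lb
    simp [hc]
    omega
  · have e2 : ∀ i ∈ Finset.range n, ubN n i = if i % 3 = 1 then 3 else 0 := by
      intro i hi
      simp [ubN, show ¬(n % 3 = 1 ∧ i = n - 1) from by tauto]
    rw [Finset.sum_congr rfl e2, Scount]
    unfold lb
    by_cases h0 : n % 3 = 0 <;> simp [h0] <;> omega

lemma ubN_isDRDF {n : ℕ} (hn : 2 ≤ n) :
    IsDRDF (SimpleGraph.pathGraph n) (fun v : Fin n => ubN n (v : ℕ)) := by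
  refine ⟨fun v => ?_, fun v hv => ?_, fun v hv => ?_⟩
  · show ubN n (v : ℕ) ≤ 3
    unfold ubN; split_ifs <;> omega
  · left
    have hv' : ubN n (v : ℕ) = 0 := hv
    have hvlt := v.isLt
    have ho : ¬(n % 3 = 1 ∧ (v : ℕ) = n - 1) := by
      intro hcon
      unfold ubN at hv'
      rw [if_pos hcon] at hv'
      omega
    have hm : (v : ℕ) % 3 ≠ 1 := by
      intro hcon
      unfold ubN at hv'
      rw [if_neg ho, if_pos hcon] at hv'
      omega
    by_cases hcase : (v : ℕ) % 3 = 0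
    · -- right neighbour has value 3
      have hvne : (v : ℕ) ≠ n - 1 := by
        intro hvn
        exact ho ⟨by omega, hvn⟩
      refine ⟨⟨(v : ℕ) + 1, by omega⟩, ?_, ?_⟩
      · rw [SimpleGraph.pathGraph_adj]; left; simp
      · show ubN n ((⟨(v : ℕ) + 1, by omega⟩ : Fin n) : ℕ) = 3
        simp only [ubN, Fin.val_mk]
        split_ifs with h1 h2 <;> omega
    · -- (v : ℕ) % 3 = 2, left neighbour has value 3
      have hv2 : 2 ≤ (v : ℕ) := by omega
      refine ⟨⟨(v : ℕ) - 1, by omega⟩, ?_, ?_⟩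
      · rw [SimpleGraph.pathGraph_adj]; right; simp; omega
      · show ubN n ((⟨(v : ℕ) - 1, by omega⟩ : Fin n) : ℕ) = 3
        simp only [ubN, Fin.val_mk]
        split_ifs with h1 h2 <;> omega
  · exfalso
    have hv' : ubN n (v : ℕ) = 1 := hv
    unfold ubN at hv'
    split_ifs at hv' <;> omega

lemma gammaDR_le {V : Type*} [Fintype V] {G : SimpleGraph V} {f : V → ℕ} (hf : IsDRDF G f) :
    gammaDR G ≤ ∑ v, f v := Nat.sInf_le ⟨f, hf, rfl⟩

lemma const_two_isDRDF {V : Type*} (G : SimpleGraph V) : IsDRDF G (fun _ => 2) :=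
  ⟨fun _ => by norm_num, fun _ h => by norm_num at h, fun _ h => by norm_num at h⟩

lemma le_gammaDR {V : Type*} [Fintype V] {G : SimpleGraph V} {c : ℕ}
    (h : ∀ f, IsDRDF G f → c ≤ ∑ v, f v) : c ≤ gammaDR G := by
  have hmem : (∑ _v : V, 2) ∈ {k | ∃ f : V → ℕ, IsDRDF G f ∧ ∑ v, f v = k} :=
    ⟨fun _ => 2, const_two_isDRDF G, rfl⟩
  apply le_csInf ⟨_, hmem⟩
  rintro k ⟨f, hf, rfl⟩
  exact h f hf

lemma gammaDR_pathGraph_le (n : ℕ) (hn : 2 ≤ n) :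
    gammaDR (SimpleGraph.pathGraph n) ≤ lb n := by
  have h := gammaDR_le (ubN_isDRDF hn)
  rw [Fin.sum_univ_eq_sum_range (ubN n) n, sum_ubN] at h
  exact h

end DRP


namespace DRP

lemma deleted_lower {n t : ℕ} (h1 : 1 ≤ t) (ht2 : t ≤ 2) (htn : t < n) {G : SimpleGraph (Fin n)}
    (hG : AdjSpec n t G) : t + 1 + lb (n - t) ≤ gammaDR G := by
  apply le_gammaDR
  intro f hf
  rw [weight_split (le_of_lt htn) f]
  have h2 := transfer h1 htn hG hf
  have h3 := (lower_bound (n - t) (by omega) _ h2).1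
  interval_cases t
  · have h0n : (0 : ℕ) < n := by omega
    have hsum : (∑ i ∈ Finset.range 1, if h : i < n then f ⟨i, h⟩ else 0) = f ⟨0, h0n⟩ := by
      rw [Finset.sum_range_one]; exact dif_pos h0n
    rw [hsum]
    exact add_le_add (prefix1 (by omega) hG hf h0n) h3
  · have h0n : (0 : ℕ) < n := by omega
    have h1n : (1 : ℕ) < n := by omega
    have hsum : (∑ i ∈ Finset.range 2, if h : i < n then f ⟨i, h⟩ else 0)
        = f ⟨0, h0n⟩ + f ⟨1, h1n⟩ := by
      rw [Finset.sum_range_succ, Finset.sum_range_one, dif_pos h0n, dif_pos h1n]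
    rw [hsum]
    exact add_le_add (prefix2 (by omega) hG hf h0n h1n) h3

def edgeB (n a : ℕ) (h : a + 1 < n) : Finset (Sym2 (Fin n)) :=
  {s(⟨a, by omega⟩, ⟨a + 1, h⟩)}

lemma edgeB_card (n a : ℕ) (h : a + 1 < n) : (edgeB n a h).card = 1 :=
  Finset.card_singleton _

lemma edgeB_sub (n a : ℕ) (h : a + 1 < n) :
    ↑(edgeB n a h) ⊆ (SimpleGraph.pathGraph n).edgeSet := by
  intro x hx
  simp only [edgeB, Finset.coe_singleton, Set.mem_singleton_iff] at hx
  subst hx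
  rw [SimpleGraph.mem_edgeSet, SimpleGraph.pathGraph_adj]
  left
  simp

lemma adjSpec_edgeB (n a : ℕ) (h : a + 1 < n) :
    AdjSpec n (a + 1) ((SimpleGraph.pathGraph n).deleteEdges ↑(edgeB n a h)) := by
  intro u v
  rw [SimpleGraph.deleteEdges_adj, SimpleGraph.pathGraph_adj]
  simp only [edgeB, Finset.coe_singleton, Set.mem_singleton_iff, Sym2.eq_iff, Fin.ext_iff,
    Fin.val_mk]
  constructor
  · rintro ⟨hp, hd⟩
    refine ⟨hp, ?_, ?_⟩ <;> intro hcon <;> exact hd (by omega)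
  · rintro ⟨hp, hd1, hd2⟩
    refine ⟨hp, ?_⟩
    rintro (⟨e1, e2⟩ | ⟨e1, e2⟩)
    · exact hd1 ⟨by omega, by omega⟩
    · exact hd2 ⟨by omega, by omega⟩

lemma lb_lt_helper (n t : ℕ) (h1 : 1 ≤ t) (htn : t < n)
    (hmod : (t = 1 ∧ n % 3 ≠ 1) ∨ (t = 2 ∧ n % 3 = 1)) : lb n < t + 1 + lb (n - t) := by
  have l1 := lb_spec n
  have l2 := lb_spec (n - t)
  omega

end DRP

/-- For every integer `n ≥ 2`, the double Roman bondage number of the path `P_n`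
on `n` vertices equals `1`. -/
theorem pathGraph_bDR (n : ℕ) (hn : 2 ≤ n) :
    bDR (SimpleGraph.pathGraph n) = 1 := by
  classical
  have hEq : bDR (SimpleGraph.pathGraph n) =
      sInf {k | ∃ B : Finset (Sym2 (Fin n)), ↑B ⊆ (SimpleGraph.pathGraph n).edgeSet ∧
        B.card = k ∧ gammaDR (SimpleGraph.pathGraph n) <
          gammaDR ((SimpleGraph.pathGraph n).deleteEdges ↑B)} := rfl
  set S := {k | ∃ B : Finset (Sym2 (Fin n)), ↑B ⊆ (SimpleGraph.pathGraph n).edgeSet ∧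
        B.card = k ∧ gammaDR (SimpleGraph.pathGraph n) <
          gammaDR ((SimpleGraph.pathGraph n).deleteEdges ↑B)} with hSdef
  rw [hEq]
  have hub := DRP.gammaDR_pathGraph_le n hn
  have h1 : 1 ∈ S := by
    by_cases hmod : n % 3 = 1
    · -- delete the edge {1,2}; n ≥ 4 here
      have hn4 : 4 ≤ n := by omega
      have ha : 1 + 1 < n := by omega
      refine ⟨DRP.edgeB n 1 ha, DRP.edgeB_sub n 1 ha, DRP.edgeB_card n 1 ha, ?_⟩
      have hlow := DRP.deleted_lower (t := 2) (by omega) (by omega) (by omega)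
        (DRP.adjSpec_edgeB n 1 ha)
      have hlt := DRP.lb_lt_helper n 2 (by omega) (by omega) (Or.inr ⟨rfl, hmod⟩)
      omega
    · -- delete the edge {0,1}
      have ha : 0 + 1 < n := by omega
      refine ⟨DRP.edgeB n 0 ha, DRP.edgeB_sub n 0 ha, DRP.edgeB_card n 0 ha, ?_⟩
      have hlow := DRP.deleted_lower (t := 0 + 1) (by omega) (by omega) (by omega)
        (DRP.adjSpec_edgeB n 0 ha)
      have hlt := DRP.lb_lt_helper n 1 (by omega) (by omega) (Or.inl ⟨rfl, hmod⟩)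
      have hlow' : 1 + 1 + DRP.lb (n - 1) ≤
          gammaDR ((SimpleGraph.pathGraph n).deleteEdges ↑(DRP.edgeB n 0 ha)) := hlow
      omega
  have h0 : 0 ∉ S := by
    rintro ⟨B, hBsub, hBcard, hBlt⟩
    rw [Finset.card_eq_zero.mp hBcard] at hBlt
    simp only [Finset.coe_empty, SimpleGraph.deleteEdges_empty] at hBlt
    exact lt_irrefl _ hBlt
  apply le_antisymm (Nat.sInf_le h1)
  by_contra hc
  push_neg at hc
  interval_cases h : sInf S
  exact h0 (h ▸ Nat.sInf_mem ⟨1, h1⟩)
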